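/- A collection of subtrees of a tree has a common node if and only if every pair of subtrees in the collection has a common node (Helly property for subtrees of a tree). -/

import Mathlib

open SimpleGraph Walk

section HellyAux

variable {ι : Type*}

/-- A chosen path between two vertices of a connected graph. -/
noncomputable def hPath (T : SimpleGraph ι) (hc : T.Connected) (a b : ι) : T.Walk a b :=
  letI := Classical.decEq ι
  ((hc.preconnected a b).some).bypass

lemma hPath_isPath (T : SimpleGraph ι) (hc : T.Connected) (a b : ι) :
    (hPath T hc a b).IsPath := by
  letI := Classical.decEq ι
  exact Walk.bypass_isPath _

/-- In a tree, any path equals the chosen path. -/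
lemma hPath_unique {T : SimpleGraph ι} (hT : T.IsTree) {a b : ι} (w : T.Walk a b)
    (hw : w.IsPath) : w = hPath T hT.isConnected a b := by
  have := hT.IsAcyclic.path_unique ⟨w, hw⟩ ⟨hPath T hT.isConnected a b,
    hPath_isPath T hT.isConnected a b⟩
  exact congrArg Subtype.val this

section Tree

variable {T : SimpleGraph ι} (hT : T.IsTree)

/-- Length of the chosen path. -/
noncomputable def hD (hT : T.IsTree) (a b : ι) : ℕ := (hPath T hT.isConnected a b).length

lemma hPath_takeUntil [DecidableEq ι] {a b x : ι}
    (hx : x ∈ (hPath T hT.isConnected a b).support) :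
    (hPath T hT.isConnected a b).takeUntil x hx = hPath T hT.isConnected a x :=
  hPath_unique hT _ ((hPath_isPath T hT.isConnected a b).takeUntil hx)

lemma hPath_dropUntil [DecidableEq ι] {a b x : ι}
    (hx : x ∈ (hPath T hT.isConnected a b).support) :
    (hPath T hT.isConnected a b).dropUntil x hx = hPath T hT.isConnected x b :=
  hPath_unique hT _ ((hPath_isPath T hT.isConnected a b).dropUntil hx)

lemma hD_split {a b x : ι} (hx : x ∈ (hPath T hT.isConnected a b).support) :
    hD hT a x + hD hT x b = hD hT a b := by
  classical
  have hs := (hPath T hT.isConnected a b).take_spec hx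
  have := congrArg Walk.length hs
  rw [Walk.length_append] at this
  rw [hPath_takeUntil hT hx, hPath_dropUntil hT hx] at this
  exact this

lemma hPath_support_drop_subset {a b x : ι}
    (hx : x ∈ (hPath T hT.isConnected a b).support) :
    (hPath T hT.isConnected x b).support ⊆ (hPath T hT.isConnected a b).support := by
  classical
  rw [← hPath_dropUntil hT hx]
  exact Walk.support_dropUntil_subset _ hx

lemma hD_eq_zero {a b : ι} (h : hD hT a b = 0) : a = b :=
  Walk.eq_of_length_eq_zero h

/-- Connected induced subgraph is closed under chosen paths. -/
lemma hPath_support_mem {S : Set ι} (hc : (T.induce S).Connected) {a b : ι}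
    (ha : a ∈ S) (hb : b ∈ S) :
    ∀ z ∈ (hPath T hT.isConnected a b).support, z ∈ S := by
  obtain ⟨w⟩ := hc.preconnected ⟨a, ha⟩ ⟨b, hb⟩
  classical
  have hW : (w.map (SimpleGraph.Embedding.induce S).toHom).bypass
      = hPath T hT.isConnected a b :=
    hPath_unique hT _ (Walk.bypass_isPath _)
  intro z hz
  rw [← hW] at hz
  have hz2 := Walk.support_bypass_subset _ hz
  erw [Walk.support_map] at hz2
  obtain ⟨y, _, rfl⟩ := List.mem_map.mp hz2
  exact y.2

/-- Gate lemma: a connected set in a finite tree has a gate towards any root. -/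
lemma helly_gate [Finite ι] {S : Set ι} (hc : (T.induce S).Connected) (r : ι) :
    ∃ g ∈ S, ∀ x ∈ S, g ∈ (hPath T hT.isConnected r x).support := by
  classical
  have hSne : S.Nonempty := by
    obtain ⟨⟨x, hx⟩⟩ := hc.nonempty
    exact ⟨x, hx⟩
  -- choose g ∈ S minimizing distance to r
  obtain ⟨g, hgS, hgmin⟩ := Finset.exists_min_image (Set.toFinite S).toFinset
    (fun y => hD hT r y) (by simpa using hSne)
  rw [Set.Finite.mem_toFinset] at hgS
  refine ⟨g, hgS, fun x hx => ?_⟩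
  set p := hPath T hT.isConnected r x with hp
  set q := hPath T hT.isConnected r g with hq
  -- choose common vertex c of p and q maximizing distance from r
  have hrc : r ∈ p.support.toFinset ∩ q.support.toFinset := by
    simp [Walk.start_mem_support]
  obtain ⟨c, hc', hcmax⟩ := Finset.exists_max_image
    (p.support.toFinset ∩ q.support.toFinset) (fun y => hD hT r y) ⟨r, hrc⟩
  simp only [Finset.mem_inter, List.mem_toFinset] at hc' hcmax
  obtain ⟨hcp, hcq⟩ := hc'
  -- the concatenation (c→g).reverse ++ (c→x) is a path
  set w := (hPath T hT.isConnected c g).reverse.append (hPath T hT.isConnected c x) with hw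
  have hwpath : w.IsPath := by
    rw [Walk.isPath_def, hw, Walk.support_append, Walk.support_reverse]
    refine List.Nodup.append ?_ ?_ ?_
    · exact List.nodup_reverse.mpr (hPath_isPath T hT.isConnected c g).support_nodup
    · have hn := (hPath_isPath T hT.isConnected c x).support_nodup
      rw [Walk.support_eq_cons] at hn
      exact (List.nodup_cons.mp hn).2
    · intro z hz1 hz2
      rw [List.mem_reverse] at hz1
      have hzc : z ≠ c := by
        intro h
        subst h
        have := (hPath_isPath T hT.isConnected z x).support_nodup
        rw [Walk.support_eq_cons] at this
        exact (List.nodup_cons.mp this).1 hz2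
      have hz2' : z ∈ (hPath T hT.isConnected c x).support := by
        rw [Walk.support_eq_cons]
        exact List.mem_cons_of_mem _ hz2
      -- z is a common vertex of p and q beyond c
      have hzq : z ∈ q.support := hPath_support_drop_subset hT hcq hz1
      have hzp : z ∈ p.support := hPath_support_drop_subset hT hcp hz2'
      have hle : hD hT r z ≤ hD hT r c := hcmax z ⟨hzp, hzq⟩
      have e1 : hD hT r z + hD hT z x = hD hT r x := hD_split hT hzp
      have e2 : hD hT r c + hD hT c x = hD hT r x := hD_split hT hcp
      have e3 : hD hT c z + hD hT z x = hD hT c x := hD_split hT hz2'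
      have : hD hT r z = hD hT r c + hD hT c z := by omega
      have hcz : hD hT c z = 0 := by omega
      exact hzc (hD_eq_zero hT hcz).symm
  have hwp : w = hPath T hT.isConnected g x := hPath_unique hT w hwpath
  have hcw : c ∈ w.support := by
    rw [hw, Walk.mem_support_append_iff]
    left
    rw [Walk.support_reverse, List.mem_reverse]
    exact Walk.start_mem_support _
  have hcS : c ∈ S := hPath_support_mem hT hc hgS hx c (hwp ▸ hcw)
  -- by minimality of g, c = g
  have hge : hD hT r g ≤ hD hT r c := hgmin c (by rwa [Set.Finite.mem_toFinset])
  have e4 : hD hT r c + hD hT c g = hD hT r g := hD_split hT hcq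
  have hcg0 : hD hT c g = 0 := by omega
  have hcgeq : c = g := hD_eq_zero hT hcg0
  rw [← hcgeq]
  exact hcp

end Tree

end HellyAux

/-- Helly property for subtrees of a tree: a finite family of subtrees of a tree
has a common node if and only if every pair of subtrees has a common node. -/
theorem helly_subtrees {ι : Type*} [Fintype ι] (T : SimpleGraph ι) (hT : T.IsTree)
    (k : ℕ) (S : Fin k → Set ι)
    (hconn : ∀ i, (T.induce (S i)).Connected) :
    (∃ t : ι, ∀ i, t ∈ S i) ↔ ∀ i j : Fin k, (S i ∩ S j).Nonempty := by
  classical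
  constructor
  · rintro ⟨t, ht⟩ i j
    exact ⟨t, ht i, ht j⟩
  · intro h
    have hne : Nonempty ι := hT.isConnected.nonempty
    obtain ⟨r⟩ := hne
    rcases isEmpty_or_nonempty (Fin k) with hk | hk
    · exact ⟨r, fun i => (hk.false i).elim⟩
    · -- gates for each subtree
      have hg : ∀ i, ∃ g ∈ S i, ∀ x ∈ S i, g ∈ (hPath T hT.isConnected r x).support :=
        fun i => helly_gate hT (hconn i) r
      choose g hgS hgate using hg
      obtain ⟨i0, _, hmax⟩ := Finset.exists_max_image Finset.univ
        (fun i => hD hT r (g i)) Finset.univ_nonempty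
      refine ⟨g i0, fun j => ?_⟩
      obtain ⟨x, hxi0, hxj⟩ := h i0 j
      set p := hPath T hT.isConnected r x with hp
      have hv : g i0 ∈ p.support := hgate i0 x hxi0
      have hu : g j ∈ p.support := hgate j x hxj
      have hvsplit : g i0 ∈ (hPath T hT.isConnected r (g j)).support
          ∨ g i0 ∈ (hPath T hT.isConnected (g j) x).support := by
        have := p.take_spec hu
        rw [← hPath_takeUntil hT hu, ← hPath_dropUntil hT hu]
        rw [← this, Walk.mem_support_append_iff] at hv
        exact hv
      rcases hvsplit with hcase | hcase
      · have e1 : hD hT r (g i0) + hD hT (g i0) (g j) = hD hT r (g j) :=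
          hD_split hT hcase
        have e2 : hD hT r (g j) ≤ hD hT r (g i0) := hmax j (Finset.mem_univ j)
        have : hD hT (g i0) (g j) = 0 := by omega
        have : g i0 = g j := hD_eq_zero hT this
        rw [this]
        exact hgS j
      · exact hPath_support_mem hT (hconn j) (hgS j) hxj _ hcase
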